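/- Let f : E → ℝ be convex with minimizer θ*, κ > 0, α ∈ (0,1], and points θ_prev, ϑ̃_prev ∈ E. Set ϑ = θ_prev + α(ϑ̃_prev − θ_prev) and suppose θ̃ satisfies: f(y) + (κ/2)‖y − ϑ‖² ≥ f(θ̃) + (κ/2)‖θ̃ − ϑ‖² + (κ/2)‖θ̃ − y‖² + ⟨v, y − θ̃⟩ for all y, with ‖v‖ ≤ (κ/(k+1))‖θ̃ − ϑ‖. Setting ϑ̃ = θ_prev + (1/α)(θ̃ − θ_prev) and y = θ_prev + α(θ* − θ_prev), one has f(θ̃) ≤ α f(θ*) + (1−α) f(θ_prev) + (κα²/2)(‖θ* − ϑ̃_prev‖² − ‖θ* − ϑ̃‖²) − (κ/2)‖θ̃ − ϑ‖² + (κα/(k+1))‖θ̃ − ϑ‖·‖ϑ̃ − θ*‖. -/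

import Mathlib

open scoped RealInnerProductSpace

theorem stmt_16 {E : Type*} [NormedAddCommGroup E] [InnerProductSpace ℝ E]
    (f : E → ℝ) (hconv : ConvexOn ℝ Set.univ f)
    (θstar : E) (hmin : ∀ y, f θstar ≤ f y)
    (κ a : ℝ) (hκ : 0 < κ) (ha : 0 < a) (ha1 : a ≤ 1) (k : ℕ)
    (θp ϑtp θt v : E)
    (hprox : ∀ y : E,
      f y + κ / 2 * ‖y - (θp + a • (ϑtp - θp))‖ ^ 2 ≥
        f θt + κ / 2 * ‖θt - (θp + a • (ϑtp - θp))‖ ^ 2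
          + κ / 2 * ‖θt - y‖ ^ 2 + ⟪v, y - θt⟫)
    (hv : ‖v‖ ≤ κ / (k + 1) * ‖θt - (θp + a • (ϑtp - θp))‖) :
    f θt ≤ a * f θstar + (1 - a) * f θp
      + κ * a ^ 2 / 2 * (‖θstar - ϑtp‖ ^ 2 - ‖θstar - (θp + (1 / a) • (θt - θp))‖ ^ 2)
      - κ / 2 * ‖θt - (θp + a • (ϑtp - θp))‖ ^ 2
      + κ * a / (k + 1) * ‖θt - (θp + a • (ϑtp - θp))‖
          * ‖(θp + (1 / a) • (θt - θp)) - θstar‖ := by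
  have hane : a ≠ 0 := ne_of_gt ha
  set ϑ := θp + a • (ϑtp - θp) with hϑ
  set w := θp + (1 / a) • (θt - θp) with hw
  set y := θp + a • (θstar - θp) with hy
  -- convexity
  have hyc : y = a • θstar + (1 - a) • θp := by rw [hy]; module
  have hconv' : f y ≤ a * f θstar + (1 - a) * f θp := by
    rw [hyc]
    exact hconv.2 (Set.mem_univ θstar) (Set.mem_univ θp) (le_of_lt ha) (by linarith)
      (by ring)
  -- algebraic identities
  have e1 : y - ϑ = a • (θstar - ϑtp) := by rw [hy, hϑ]; module
  have e2 : θt - y = a • (w - θstar) := by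
    rw [hy, hw]; match_scalars <;> field_simp <;> ring
  have e3 : y - θt = a • (θstar - w) := by
    rw [hy, hw]; match_scalars <;> field_simp <;> ring
  -- norms
  have n1 : ‖y - ϑ‖ ^ 2 = a ^ 2 * ‖θstar - ϑtp‖ ^ 2 := by
    rw [e1, norm_smul, Real.norm_eq_abs, abs_of_pos ha]; ring
  have n2 : ‖θt - y‖ ^ 2 = a ^ 2 * ‖w - θstar‖ ^ 2 := by
    rw [e2, norm_smul, Real.norm_eq_abs, abs_of_pos ha]; ring
  have nsym : ‖θstar - w‖ = ‖w - θstar‖ := norm_sub_rev _ _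
  -- inner product bound
  have hip : ⟪v, y - θt⟫ ≥ -(‖v‖ * (a * ‖w - θstar‖)) := by
    have h1 := abs_real_inner_le_norm v (y - θt)
    have h2 : ‖y - θt‖ = a * ‖w - θstar‖ := by
      rw [e3, norm_smul, Real.norm_eq_abs, abs_of_pos ha, nsym]
    rw [h2] at h1
    have := abs_le.mp h1
    linarith [this.1]
  have hp := hprox y
  have hnn : (0:ℝ) ≤ a * ‖w - θstar‖ := by positivity
  have hv' : ‖v‖ * (a * ‖w - θstar‖) ≤
      κ / (k + 1) * ‖θt - ϑ‖ * (a * ‖w - θstar‖) :=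
    mul_le_mul_of_nonneg_right hv hnn
  have hwnorm : ‖θstar - w‖ = ‖w - θstar‖ := nsym
  rw [n1, n2] at hp
  have hpos : (0:ℝ) ≤ ‖w - θstar‖ ^ 2 := by positivity
  rw [nsym]
  have key : κ * a / (k + 1) * ‖θt - ϑ‖ * ‖w - θstar‖ = κ / (k + 1) * ‖θt - ϑ‖ * (a * ‖w - θstar‖) := by ring
  rw [key]
  linarith [hp, hconv', hip, hv']
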